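/- Consider E(x) = ‖x‖₁ - ‖x‖₂ + (1/2)(x₁ + x₂ - 1)² on ℝ². The points (1, 0) and (0, 1) are global minimizers of E with E = 0, and x* = (1/(2√2), 1/(2√2)) is a stationary point of E (it satisfies the first-order optimality condition) that is not a global minimizer. -/

import Mathlib

/-- The objective of Example 3 in the paper, on ℝ². -/
noncomputable def Eobj (z : ℝ × ℝ) : ℝ :=
  |z.1| + |z.2| - Real.sqrt (z.1 ^ 2 + z.2 ^ 2) + 1 / 2 * (z.1 + z.2 - 1) ^ 2

lemma sqrt_le_abs_add (a b : ℝ) : Real.sqrt (a ^ 2 + b ^ 2) ≤ |a| + |b| := by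
  rw [show |a| + |b| = Real.sqrt ((|a| + |b|) ^ 2) from
    (Real.sqrt_sq (by positivity)).symm]
  apply Real.sqrt_le_sqrt
  have ha := abs_nonneg a
  have hb := abs_nonneg b
  nlinarith [sq_abs a, sq_abs b, mul_nonneg ha hb]

lemma Eobj_nonneg (z : ℝ × ℝ) : 0 ≤ Eobj z := by
  have h := sqrt_le_abs_add z.1 z.2
  have h2 : (0:ℝ) ≤ 1 / 2 * (z.1 + z.2 - 1) ^ 2 := by positivity
  unfold Eobj; linarith

lemma Eobj_one_zero : Eobj (1, 0) = 0 := by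
  simp [Eobj]

lemma Eobj_zero_one : Eobj (0, 1) = 0 := by
  simp [Eobj]

theorem stmt19 :
    (∀ z, Eobj (1, 0) ≤ Eobj z) ∧ Eobj (1, 0) = 0 ∧
      (∀ z, Eobj (0, 1) ≤ Eobj z) ∧ Eobj (0, 1) = 0 ∧
      -- first-order stationarity of (s, s): for each coordinate,
      -- sign(s) - s/‖(s,s)‖₂ + ∇l(s,s) = 0, and (s,s) is not a global minimizer
      (let s : ℝ := 1 / (2 * Real.sqrt 2);
        (1 - s / Real.sqrt (s ^ 2 + s ^ 2) + (s + s - 1) = 0) ∧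
        ¬ ∀ z, Eobj (s, s) ≤ Eobj z) := by
  have h2 : Real.sqrt 2 > 0 := by positivity
  have h2sq : Real.sqrt 2 ^ 2 = 2 := Real.sq_sqrt (by norm_num)
  set s : ℝ := 1 / (2 * Real.sqrt 2) with hs
  have hsrt : Real.sqrt (s ^ 2 + s ^ 2) = 1 / 2 := by
    have : s ^ 2 + s ^ 2 = (1/2 : ℝ) ^ 2 := by
      field_simp [hs]
      nlinarith [show s ^ 2 * 8 = 1 by rw [hs, div_pow, mul_pow, h2sq]; norm_num]
    rw [this, Real.sqrt_sq (by norm_num)]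
  refine ⟨fun z => le_trans Eobj_one_zero.le (Eobj_nonneg z), Eobj_one_zero,
    fun z => le_trans Eobj_zero_one.le (Eobj_nonneg z), Eobj_zero_one, ?_, ?_⟩
  · rw [hsrt]
    field_simp
    ring
  · intro hall
    have := hall (1, 0)
    rw [Eobj_one_zero] at this
    have hspos : 0 < s := by positivity
    have hE : Eobj (s, s) = 2 * s - 1 / 2 + 1 / 2 * (2 * s - 1) ^ 2 := by
      simp only [Eobj]
      rw [hsrt, abs_of_pos hspos]
      ring
    rw [hE] at this
    have h2s : 2 * s = Real.sqrt 2 / 2 := by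
      rw [hs]; field_simp; nlinarith
    rw [h2s] at this
    nlinarith [Real.sqrt_lt_sqrt (by norm_num : (0:ℝ) ≤ 1) (by norm_num : (1:ℝ) < 2),
      Real.sqrt_one]
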